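/- Let n ∈ ℕ, t ∈ ℝ, let E be a real Banach space, and let e : ℝ → E be Lipschitz continuous on a neighborhood of t. Let f : ℝ → ℝ → ℝ be such that there exist δ > 0 and C > 0 with: for every h ∈ (0, δ], the function ζ ↦ f(h, ζ) is integrable on [0, h], satisfies ∫₀^h f(h, ζ) dζ = 0, and |f(h, ζ)| ≤ C hⁿ for all ζ ∈ [0, h]. Then the function h ↦ ∫₀^h f(h, ζ) e(t+ζ) dζ is O(h^{n+2}) as h → 0⁺, i.e. there exist constants K > 0 and δ' > 0 such that ‖ ∫₀^h f(h, ζ) e(t+ζ) dζ ‖ ≤ K h^{n+2} for all h ∈ (0, δ']. -/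

import Mathlib

theorem zero_mean_gain_of_power (n : ℕ) (t : ℝ) {E : Type*} [NormedAddCommGroup E]
    [NormedSpace ℝ E] [CompleteSpace E] (e : ℝ → E)
    (he : ∃ U ∈ nhds t, ∃ K : NNReal, LipschitzOnWith K e U)
    (f : ℝ → ℝ → ℝ)
    (hf : ∃ δ > (0:ℝ), ∃ C > (0:ℝ), ∀ h ∈ Set.Ioc (0:ℝ) δ,
      MeasureTheory.IntegrableOn (f h) (Set.Icc 0 h) ∧
      (∫ ζ in (0:ℝ)..h, f h ζ) = 0 ∧
      ∀ ζ ∈ Set.Icc (0:ℝ) h, |f h ζ| ≤ C * h ^ n) :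
    ∃ K > (0:ℝ), ∃ δ' > (0:ℝ), ∀ h ∈ Set.Ioc (0:ℝ) δ',
      ‖∫ ζ in (0:ℝ)..h, f h ζ • e (t + ζ)‖ ≤ K * h ^ (n + 2) := by
  obtain ⟨U, hU, K, hLip⟩ := he
  obtain ⟨δ, hδ, C, hC, hf⟩ := hf
  obtain ⟨ε, hε, hball⟩ := Metric.nhds_basis_ball.mem_iff.mp hU
  refine ⟨C * (K + 1), by positivity, min δ (ε / 2), by positivity, ?_⟩
  rintro h ⟨hh0, hhδ⟩
  have hhδ' : h ≤ δ := le_trans hhδ (min_le_left _ _)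
  have hhε : h < ε := lt_of_le_of_lt (le_trans hhδ (min_le_right _ _)) (by linarith)
  obtain ⟨hint, hzero, hbd⟩ := hf h ⟨hh0, hhδ'⟩
  have hh0' : (0:ℝ) ≤ h := hh0.le
  have hmem : ∀ ζ ∈ Set.Icc (0:ℝ) h, t + ζ ∈ U := by
    intro ζ hζ
    apply hball
    simp only [Metric.mem_ball, Real.dist_eq]
    rw [show t + ζ - t = ζ by ring, abs_of_nonneg hζ.1]
    exact lt_of_le_of_lt hζ.2 hhε
  have htU : t ∈ U := hball (Metric.mem_ball_self hε)
  have hcont : ContinuousOn (fun ζ => e (t + ζ)) (Set.Icc 0 h) :=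
    hLip.continuousOn.comp ((continuous_const.add continuous_id).continuousOn) hmem
  have hbnd : ∀ ζ ∈ Set.Icc (0:ℝ) h,
      ‖f h ζ • (e (t + ζ) - e t)‖ ≤ C * h ^ n * (K * h) := by
    intro ζ hζ
    rw [norm_smul, Real.norm_eq_abs]
    have h1 := hbd ζ hζ
    have h2 : ‖e (t + ζ) - e t‖ ≤ K * h := by
      have hd := hLip.dist_le_mul (t + ζ) (hmem ζ hζ) t htU
      rw [dist_eq_norm] at hd
      refine le_trans hd ?_
      rw [Real.dist_eq, show t + ζ - t = ζ by ring, abs_of_nonneg hζ.1]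
      exact mul_le_mul_of_nonneg_left hζ.2 K.coe_nonneg
    exact mul_le_mul h1 h2 (norm_nonneg _) (by positivity)
  have hI1 : IntervalIntegrable (fun ζ => f h ζ • e t) MeasureTheory.volume 0 h := by
    rw [intervalIntegrable_iff_integrableOn_Ioc_of_le hh0']
    exact (hint.mono_set Set.Ioc_subset_Icc_self).smul_const _
  have hgmeas : MeasureTheory.AEStronglyMeasurable (fun ζ => f h ζ • (e (t + ζ) - e t))
      (MeasureTheory.volume.restrict (Set.Ioc 0 h)) := by
    apply MeasureTheory.AEStronglyMeasurable.smul
    · exact (hint.mono_set Set.Ioc_subset_Icc_self).aestronglyMeasurable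
    · exact ((hcont.mono Set.Ioc_subset_Icc_self).aestronglyMeasurable
        measurableSet_Ioc).sub MeasureTheory.aestronglyMeasurable_const
  have hI2 : IntervalIntegrable (fun ζ => f h ζ • (e (t + ζ) - e t))
      MeasureTheory.volume 0 h := by
    rw [intervalIntegrable_iff_integrableOn_Ioc_of_le hh0']
    refine MeasureTheory.Integrable.mono' (g := fun _ => C * h ^ n * (K * h))
      ((MeasureTheory.integrableOn_const_iff).mpr (Or.inr measure_Ioc_lt_top)) hgmeas ?_
    filter_upwards [MeasureTheory.ae_restrict_mem measurableSet_Ioc] with ζ hζ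
    exact hbnd ζ (Set.Ioc_subset_Icc_self hζ)
  have key : (∫ ζ in (0:ℝ)..h, f h ζ • e (t + ζ))
      = ∫ ζ in (0:ℝ)..h, f h ζ • (e (t + ζ) - e t) := by
    have heq : (∫ ζ in (0:ℝ)..h, f h ζ • e (t + ζ))
        = ∫ ζ in (0:ℝ)..h, (f h ζ • (e (t + ζ) - e t) + f h ζ • e t) := by
      congr 1
      ext ζ
      rw [smul_sub]
      abel
    rw [heq, intervalIntegral.integral_add hI2 hI1,
      intervalIntegral.integral_smul_const, hzero, zero_smul, add_zero]
  rw [key]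
  have hle := intervalIntegral.norm_integral_le_of_norm_le_const
    (C := C * h ^ n * (K * h)) (f := fun ζ => f h ζ • (e (t + ζ) - e t))
    (a := (0:ℝ)) (b := h) (by
      intro x hx
      rw [Set.uIoc_of_le hh0'] at hx
      exact hbnd x (Set.Ioc_subset_Icc_self hx))
  rw [sub_zero, abs_of_nonneg hh0'] at hle
  refine le_trans hle ?_
  have hKnn : (0:ℝ) ≤ K := K.coe_nonneg
  have : C * h ^ n * (K * h) * h = C * K * h ^ (n + 2) := by ring
  rw [this]
  have : (C * K) * h ^ (n + 2) ≤ (C * (K + 1)) * h ^ (n + 2) := by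
    apply mul_le_mul_of_nonneg_right _ (by positivity)
    nlinarith
  linarith
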